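/- arXiv:1807.08604 — 4 statements merged into one kernel-verified Lean document; each statement's English description precedes it below -/
import Mathlib

section
/- Let p, q be real polynomials of the same degree m with equal nonzero leading coefficients, and f = p/q. Then the limit lim_{s→∞} (1/2)·s·ln|f(s)| exists (along real s → +∞) and equals (1/2)·(p_{m-1}/p_m − q_{m-1}/q_m). -/
open Filter Polynomial

private noncomputable def Fln : ℝ → ℝ := fun x => if x = 0 then 1 else Real.log (1 + x) / x

private lemma Fln_id (x : ℝ) : Real.log (1 + x) = x * Fln x := by
  unfold Fln
  by_cases h : x = 0
  · simp [h]
  · rw [if_neg h]; field_simp [h]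

private lemma Fln_tendsto : Tendsto Fln (nhds 0) (nhds 1) := by
  have hd : HasDerivAt (fun x : ℝ => Real.log (1 + x)) 1 0 := by
    have := (Real.hasDerivAt_log (by norm_num : (1:ℝ) + 0 ≠ 0)).comp 0
      ((hasDerivAt_id (0:ℝ)).const_add 1)
    simpa [Function.comp_def] using this
  have hs := hasDerivAt_iff_tendsto_slope.mp hd
  rw [← nhdsNE_sup_pure (0:ℝ), tendsto_sup]
  constructor
  · refine hs.congr' ?_
    filter_upwards [self_mem_nhdsWithin] with x hx
    simp only [Set.mem_compl_iff, Set.mem_singleton_iff] at hx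
    simp [slope, Fln, hx, Real.log_one, sub_zero, div_eq_inv_mul]
  · have : Fln 0 = 1 := by simp [Fln]
    simpa [this] using (tendsto_pure_pure Fln 0).mono_right (pure_le_nhds _)

private lemma ratio_lim {m : ℕ} (P Q : Polynomial ℝ) (hQ : Q.natDegree = m)
    (hQne : Q.coeff m ≠ 0) (hP : P.degree ≤ (m : WithBot ℕ)) :
    Tendsto (fun x => P.eval x / Q.eval x) atTop (nhds (P.coeff m / Q.coeff m)) := by
  have hQ0 : Q ≠ 0 := fun h => hQne (by simp [h])
  have hQdeg : Q.degree = (m : WithBot ℕ) := by rw [Polynomial.degree_eq_natDegree hQ0, hQ]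
  rcases lt_or_eq_of_le hP with h | h
  · have : P.coeff m = 0 := Polynomial.coeff_eq_zero_of_degree_lt (by rw [← hQdeg] at h ⊢; exact h)
    rw [this, zero_div]
    exact Polynomial.div_tendsto_zero_of_degree_lt P Q (by rw [hQdeg]; exact h)
  · have hPdeg : P.degree = Q.degree := by rw [hQdeg, h]
    have hP0 : P ≠ 0 := by
      intro h0; rw [h0] at h; simp at h
    have hPn : P.natDegree = m := Polynomial.natDegree_eq_of_degree_eq_some h
    have := Polynomial.div_tendsto_leadingCoeff_div_of_degree_eq P Q hPdeg
    simpa [Polynomial.leadingCoeff, hPn, hQ] using this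

theorem stmt1 (m : ℕ) (p q : Polynomial ℝ)
    (hp : p.natDegree = m) (hq : q.natDegree = m)
    (hlead : p.coeff m = q.coeff m) (hne : p.coeff m ≠ 0) :
    Tendsto (fun s : ℝ => (1 / 2) * s * Real.log |p.eval s / q.eval s|) atTop
      (nhds ((1 / 2) * (p.coeff (m - 1) / p.coeff m - q.coeff (m - 1) / q.coeff m))) := by
  have hp0 : p ≠ 0 := fun h => hne (by simp [h])
  have hq0 : q ≠ 0 := fun h => hne (by rw [hlead, h]; simp)
  rcases Nat.eq_zero_or_pos m with hm | hm
  · -- m = 0 : p and q are equal constants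
    subst hm
    obtain ⟨a, rfl⟩ := Polynomial.natDegree_eq_zero.mp hp
    obtain ⟨b, rfl⟩ := Polynomial.natDegree_eq_zero.mp hq
    simp only [Polynomial.coeff_C_zero] at hlead hne ⊢
    subst hlead
    have : (fun s : ℝ => (1 / 2) * s * Real.log |Polynomial.eval s (Polynomial.C a) /
        Polynomial.eval s (Polynomial.C a)|) = fun _ => 0 := by
      funext s
      simp [div_self hne]
    rw [this]
    simpa using (tendsto_const_nhds : Tendsto (fun _ : ℝ => (0:ℝ)) atTop (nhds 0))
  · obtain ⟨n, rfl⟩ : ∃ n, m = n + 1 := ⟨m - 1, (Nat.succ_pred_eq_of_pos hm).symm⟩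
    set m := n + 1
    set c := p.coeff m with hc
    -- the difference polynomial
    have hpdeg : p.degree = (m : WithBot ℕ) := Polynomial.degree_eq_natDegree hp0 ▸ by rw [hp]
    have hqdeg : q.degree = (m : WithBot ℕ) := Polynomial.degree_eq_natDegree hq0 ▸ by rw [hq]
    have hlc : p.leadingCoeff = q.leadingCoeff := by
      simp only [Polynomial.leadingCoeff, hp, hq]
      exact hlead
    -- degree (X * (p - q)) ≤ m
    have hdsub : (p - q).degree < (m : WithBot ℕ) := by
      rw [← hpdeg]
      exact Polynomial.degree_sub_lt (hpdeg.trans hqdeg.symm) hp0 hlc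
    have hXd : (Polynomial.X * (p - q)).degree ≤ (m : WithBot ℕ) := by
      rcases eq_or_ne (p - q) 0 with h0 | h0
      · rw [h0, mul_zero, Polynomial.degree_zero]; exact bot_le
      · rw [Polynomial.degree_mul, Polynomial.degree_X]
        have : (p - q).degree ≤ ((n : ℕ) : WithBot ℕ) := by
          rw [Polynomial.degree_eq_natDegree h0] at hdsub ⊢
          exact_mod_cast Nat.lt_succ_iff.mp (by exact_mod_cast hdsub)
        calc (1 : WithBot ℕ) + (p - q).degree ≤ 1 + (n : WithBot ℕ) := by
              exact add_le_add_right this 1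
          _ = (m : WithBot ℕ) := by
              norm_cast
              omega
    -- limit A of s * (p(s)/q(s) - 1)
    have hA : Tendsto (fun s => Polynomial.eval s (Polynomial.X * (p - q)) / Polynomial.eval s q)
        atTop (nhds ((p.coeff n - q.coeff n) / c)) := by
      have := ratio_lim (Polynomial.X * (p - q)) q hq (hlead ▸ hne) hXd
      have hXc : (Polynomial.X * (p - q)).coeff m = (p - q).coeff n := Polynomial.coeff_X_mul _ _
      rw [hXc] at this
      simpa [Polynomial.coeff_X_mul, Polynomial.coeff_sub, ← hlead] using this
    -- q eventually nonzero
    have hqev : ∀ᶠ s : ℝ in atTop, Polynomial.eval s q ≠ 0 := q.eventually_no_roots hq0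
    -- g → 1
    have hg : Tendsto (fun s => Polynomial.eval s p / Polynomial.eval s q) atTop (nhds 1) := by
      have := ratio_lim p q hq (hlead ▸ hne) (le_of_eq hpdeg)
      rwa [← hlead, div_self hne] at this
    have hu : Tendsto (fun s => Polynomial.eval s p / Polynomial.eval s q - 1) atTop (nhds 0) := by
      simpa using hg.sub (tendsto_const_nhds : Tendsto (fun _ : ℝ => (1:ℝ)) atTop (nhds 1))
    have hF : Tendsto (fun s => Fln (Polynomial.eval s p / Polynomial.eval s q - 1)) atTop
        (nhds 1) := Fln_tendsto.comp hu
    -- eventually g > 0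
    have hgpos : ∀ᶠ s : ℝ in atTop, 0 < Polynomial.eval s p / Polynomial.eval s q :=
      hg.eventually (eventually_gt_nhds one_pos)
    -- main convergence
    have hmain : Tendsto (fun s : ℝ => (1 / 2) *
        (Polynomial.eval s (Polynomial.X * (p - q)) / Polynomial.eval s q) *
        Fln (Polynomial.eval s p / Polynomial.eval s q - 1)) atTop
        (nhds ((1 / 2) * ((p.coeff n - q.coeff n) / c) * 1)) :=
      ((tendsto_const_nhds.mul hA).mul hF)
    have hval : (1 / 2 : ℝ) * ((p.coeff n - q.coeff n) / c) * 1 =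
        (1 / 2) * (p.coeff (m - 1) / p.coeff m - q.coeff (m - 1) / q.coeff m) := by
      have : q.coeff m = c := hlead.symm
      rw [this, ← hc]
      show (1 / 2 : ℝ) * ((p.coeff n - q.coeff n) / c) * 1 =
        (1 / 2) * (p.coeff n / c - q.coeff n / c)
      field_simp
    rw [← hval]
    refine hmain.congr' ?_
    filter_upwards [hqev, hgpos] with s hs hpos
    have hlog : Real.log |Polynomial.eval s p / Polynomial.eval s q| =
        (Polynomial.eval s p / Polynomial.eval s q - 1) *
        Fln (Polynomial.eval s p / Polynomial.eval s q - 1) := by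
      rw [abs_of_pos hpos]
      have := Fln_id (Polynomial.eval s p / Polynomial.eval s q - 1)
      rwa [add_sub_cancel] at this
    have heval : Polynomial.eval s (Polynomial.X * (p - q)) / Polynomial.eval s q =
        s * (Polynomial.eval s p / Polynomial.eval s q - 1) := by
      simp only [Polynomial.eval_mul, Polynomial.eval_X, Polynomial.eval_sub]
      rw [div_sub_one hs, mul_div_assoc]
    rw [heval, hlog]
    ring
end

section
/- For real numbers a > 0 and c ≥ 0, the integral over ω ∈ ℝ of ln(1 + c/(ω² + a²)) dω equals 2π(√(a² + c) − a). -/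
open Real MeasureTheory
open Set Filter Topology

theorem stmt5 (a c : ℝ) (ha : 0 < a) (hc : 0 ≤ c) :
    ∫ ω : ℝ, Real.log (1 + c / (ω ^ 2 + a ^ 2)) = 2 * π * (Real.sqrt (a ^ 2 + c) - a) := by
  set b := Real.sqrt (a ^ 2 + c) with hbdef
  have hac : (0:ℝ) ≤ a ^ 2 + c := by positivity
  have hb2 : b ^ 2 = a ^ 2 + c := Real.sq_sqrt hac
  have hb0 : 0 < b := Real.sqrt_pos.2 (by positivity)
  have hpa : ∀ x : ℝ, (0:ℝ) < x ^ 2 + a ^ 2 := fun x => by positivity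
  have hpb : ∀ x : ℝ, (0:ℝ) < x ^ 2 + b ^ 2 := fun x => by positivity
  -- key log identity
  have key : ∀ x : ℝ, Real.log (x ^ 2 + b ^ 2) - Real.log (x ^ 2 + a ^ 2)
      = Real.log (1 + c / (x ^ 2 + a ^ 2)) := by
    intro x
    rw [← Real.log_div (hpb x).ne' (hpa x).ne']
    congr 1
    field_simp
    rw [hb2]; ring
  -- integrand is even
  have heven : (∫ ω : ℝ, Real.log (1 + c / (ω ^ 2 + a ^ 2)))
      = ∫ ω : ℝ, Real.log (1 + c / (|ω| ^ 2 + a ^ 2)) := by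
    congr 1; funext ω; rw [sq_abs]
  -- antiderivative
  set G : ℝ → ℝ := fun x => x * (Real.log (x ^ 2 + b ^ 2) - Real.log (x ^ 2 + a ^ 2))
      + 2 * b * Real.arctan (x / b) - 2 * a * Real.arctan (x / a) with hG
  have hderiv : ∀ x : ℝ, HasDerivAt G (Real.log (1 + c / (x ^ 2 + a ^ 2))) x := by
    intro x
    have hsq : HasDerivAt (fun y : ℝ => y ^ 2 + b ^ 2) (2 * x) x := by
      simpa using ((hasDerivAt_pow 2 x).add_const (b ^ 2))
    have hsqa : HasDerivAt (fun y : ℝ => y ^ 2 + a ^ 2) (2 * x) x := by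
      simpa using ((hasDerivAt_pow 2 x).add_const (a ^ 2))
    have hlogb : HasDerivAt (fun y : ℝ => Real.log (y ^ 2 + b ^ 2))
        (2 * x / (x ^ 2 + b ^ 2)) x := hsq.log (hpb x).ne'
    have hloga : HasDerivAt (fun y : ℝ => Real.log (y ^ 2 + a ^ 2))
        (2 * x / (x ^ 2 + a ^ 2)) x := hsqa.log (hpa x).ne'
    have hprod : HasDerivAt (fun y : ℝ => y * (Real.log (y ^ 2 + b ^ 2) - Real.log (y ^ 2 + a ^ 2)))
        (1 * (Real.log (x ^ 2 + b ^ 2) - Real.log (x ^ 2 + a ^ 2))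
          + x * (2 * x / (x ^ 2 + b ^ 2) - 2 * x / (x ^ 2 + a ^ 2))) x :=
      (hasDerivAt_id x).mul (hlogb.sub hloga)
    have hdivb : HasDerivAt (fun y : ℝ => y / b) (1 / b) x := by
      simpa using (hasDerivAt_id x).div_const b
    have hdiva : HasDerivAt (fun y : ℝ => y / a) (1 / a) x := by
      simpa using (hasDerivAt_id x).div_const a
    have harctb : HasDerivAt (fun y : ℝ => Real.arctan (y / b))
        (1 / (1 + (x / b) ^ 2) * (1 / b)) x :=
      (Real.hasDerivAt_arctan (x / b)).comp (h₂ := Real.arctan) x hdivb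
    have harcta : HasDerivAt (fun y : ℝ => Real.arctan (y / a))
        (1 / (1 + (x / a) ^ 2) * (1 / a)) x :=
      (Real.hasDerivAt_arctan (x / a)).comp (h₂ := Real.arctan) x hdiva
    have h := (hprod.add ((harctb.const_mul (2 * b)))).sub ((harcta.const_mul (2 * a)))
    refine (h.congr_deriv ?_ : _)
    rw [← key x]
    have h1 : 1 + (x / b) ^ 2 ≠ 0 := by positivity
    have h2 : 1 + (x / a) ^ 2 ≠ 0 := by positivity
    field_simp
    ring
  have hnonneg : ∀ x : ℝ, 0 ≤ Real.log (1 + c / (x ^ 2 + a ^ 2)) := fun x =>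
    Real.log_nonneg (by nlinarith [div_nonneg hc (hpa x).le])
  -- limit at infinity
  have hlim1 : Tendsto (fun x : ℝ => x * (Real.log (x ^ 2 + b ^ 2) - Real.log (x ^ 2 + a ^ 2)))
      atTop (𝓝 0) := by
    refine tendsto_of_tendsto_of_tendsto_of_le_of_le' (g := fun _ : ℝ => (0:ℝ))
      (h := fun x : ℝ => c / x) tendsto_const_nhds
      (Tendsto.div_atTop tendsto_const_nhds tendsto_id) ?_ ?_
    · filter_upwards [eventually_gt_atTop (0:ℝ)] with x hx
      rw [key x]
      exact mul_nonneg hx.le (hnonneg x)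
    · filter_upwards [eventually_gt_atTop (0:ℝ)] with x hx
      rw [key x]
      have hlog : Real.log (1 + c / (x ^ 2 + a ^ 2)) ≤ c / (x ^ 2 + a ^ 2) := by
        have := Real.log_le_sub_one_of_pos (x := 1 + c / (x ^ 2 + a ^ 2))
          (by nlinarith [div_nonneg hc (hpa x).le])
        linarith
      calc x * Real.log (1 + c / (x ^ 2 + a ^ 2)) ≤ x * (c / (x ^ 2 + a ^ 2)) := by
            exact mul_le_mul_of_nonneg_left hlog hx.le
        _ ≤ c / x := by
            rw [mul_div_assoc' x c _, div_le_div_iff₀ (hpa x) hx]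
            nlinarith [sq_nonneg a, mul_nonneg (mul_nonneg hc hx.le) hx.le]
  have harctanlim : ∀ d : ℝ, 0 < d → Tendsto (fun x : ℝ => Real.arctan (x / d)) atTop (𝓝 (π/2)) := by
    intro d hd
    exact (tendsto_nhds_of_tendsto_nhdsWithin Real.tendsto_arctan_atTop).comp
      (tendsto_id.atTop_div_const hd)
  have hGtop : Tendsto G atTop (𝓝 (π * b - π * a)) := by
    have := (hlim1.add ((harctanlim b hb0).const_mul (2 * b))).sub
      ((harctanlim a ha).const_mul (2 * a))
    convert this using 2
    ring
  have hG0 : G 0 = 0 := by simp [hG]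
  have hIoi : ∫ x in Ioi (0:ℝ), Real.log (1 + c / (x ^ 2 + a ^ 2)) = (π * b - π * a) - G 0 :=
    integral_Ioi_of_hasDerivAt_of_nonneg' (fun x _ => hderiv x)
      (fun x _ => hnonneg x) hGtop
  rw [heven, integral_comp_abs (f := fun x => Real.log (1 + c / (x ^ 2 + a ^ 2))), hIoi, hG0]
  ring
end

section
/- Let A ∈ ℝ^{m×m}, C ∈ ℝ^{l×m}, W ∈ ℝ^{m×m}, V ∈ ℝ^{l×l} invertible, and let P ∈ ℝ^{m×m} be symmetric satisfying the algebraic Riccati equation AP + PAᵀ + W − PCᵀV⁻¹CP = 0. Set K = PCᵀV⁻¹. Then for every complex s such that sI − A and −sI − A are invertible, the spectral factorization identity holds: [I + C(sI − A)⁻¹K]·V·[I + C(−sI − A)⁻¹K]ᵀ = C(sI − A)⁻¹W(−sI − A)⁻ᵀCᵀ + V. -/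
open Matrix Complex

theorem stmt9 (m l : ℕ) (A W P : Matrix (Fin m) (Fin m) ℝ)
    (C : Matrix (Fin l) (Fin m) ℝ) (V : Matrix (Fin l) (Fin l) ℝ)
    (hV : V.IsSymm) (hVinv : IsUnit V) (hP : P.IsSymm)
    (hare : A * P + P * Aᵀ + W - P * Cᵀ * V⁻¹ * C * P = 0)
    (s : ℂ)
    (h1 : IsUnit (s • (1 : Matrix (Fin m) (Fin m) ℂ) - A.map (Complex.ofReal)))
    (h2 : IsUnit (-(s • (1 : Matrix (Fin m) (Fin m) ℂ)) - A.map (Complex.ofReal))) :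
    letI Ac := A.map (Complex.ofReal)
    letI Cc := C.map (Complex.ofReal)
    letI Wc := W.map (Complex.ofReal)
    letI Vc := V.map (Complex.ofReal)
    letI Kc := (P * Cᵀ * V⁻¹).map (Complex.ofReal)
    (1 + Cc * (s • (1 : Matrix (Fin m) (Fin m) ℂ) - Ac)⁻¹ * Kc) * Vc *
        (1 + Cc * (-(s • (1 : Matrix (Fin m) (Fin m) ℂ)) - Ac)⁻¹ * Kc)ᵀ =
      Cc * (s • (1 : Matrix (Fin m) (Fin m) ℂ) - Ac)⁻¹ * Wc *
        ((-(s • (1 : Matrix (Fin m) (Fin m) ℂ)) - Ac)⁻¹)ᵀ * Ccᵀ + Vc := by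
  have hVdet : IsUnit V.det := V.isUnit_iff_isUnit_det.mp hVinv
  -- real facts
  have rKV : (P * Cᵀ * V⁻¹) * V = P * Cᵀ := by
    rw [Matrix.mul_assoc, Matrix.nonsing_inv_mul V hVdet, Matrix.mul_one]
  have rVK : V * (P * Cᵀ * V⁻¹)ᵀ = C * P := by
    rw [Matrix.transpose_mul, Matrix.transpose_mul, Matrix.transpose_nonsing_inv,
      hV.eq, Matrix.transpose_transpose, hP.eq, ← Matrix.mul_assoc, ← Matrix.mul_assoc,
      Matrix.mul_nonsing_inv V hVdet, Matrix.one_mul]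
  have rW : W = (P * Cᵀ * V⁻¹) * V * (P * Cᵀ * V⁻¹)ᵀ - A * P - P * Aᵀ := by
    have hx : (P * Cᵀ * V⁻¹) * V * (P * Cᵀ * V⁻¹)ᵀ = P * Cᵀ * V⁻¹ * C * P := by
      rw [Matrix.mul_assoc (P * Cᵀ * V⁻¹), rVK, ← Matrix.mul_assoc]
    rw [hx]
    rw [sub_eq_zero] at hare
    rw [← hare]; abel
  -- transfer to ℂ
  have hmap : ∀ (p q r : ℕ) (X : Matrix (Fin p) (Fin q) ℝ) (Y : Matrix (Fin q) (Fin r) ℝ),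
      (X * Y).map Complex.ofReal = X.map Complex.ofReal * Y.map Complex.ofReal := by
    intro p q r X Y
    ext i j
    simp [Matrix.mul_apply, Matrix.map_apply]
  set Ac : Matrix (Fin m) (Fin m) ℂ := A.map Complex.ofReal with hAc
  set Cc : Matrix (Fin l) (Fin m) ℂ := C.map Complex.ofReal with hCc
  set Wc : Matrix (Fin m) (Fin m) ℂ := W.map Complex.ofReal with hWcdef
  set Vc : Matrix (Fin l) (Fin l) ℂ := V.map Complex.ofReal with hVc
  set Kc : Matrix (Fin m) (Fin l) ℂ := (P * Cᵀ * V⁻¹).map Complex.ofReal with hKc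
  set Pc : Matrix (Fin m) (Fin m) ℂ := P.map Complex.ofReal with hPcdef
  set S : Matrix (Fin m) (Fin m) ℂ := s • (1 : Matrix (Fin m) (Fin m) ℂ) - Ac with hSdef
  set T : Matrix (Fin m) (Fin m) ℂ := -(s • (1 : Matrix (Fin m) (Fin m) ℂ)) - Ac with hTdef
  have hKV : Kc * Vc = Pc * Ccᵀ := by
    rw [hKc, hVc, ← hmap, rKV, hmap, Matrix.transpose_map, hPcdef, hCc]
  have hVK : Vc * Kcᵀ = Cc * Pc := by
    rw [hKc, hVc, ← Matrix.transpose_map, ← hmap, rVK, hmap, hPcdef, hCc]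
  have hWc : Wc = Kc * Vc * Kcᵀ + S * Pc + Pc * Tᵀ := by
    have h3 : S * Pc + Pc * Tᵀ = -(Ac * Pc) - Pc * Acᵀ := by
      rw [hSdef, hTdef, Matrix.transpose_sub, Matrix.transpose_neg, Matrix.transpose_smul,
        Matrix.transpose_one]
      simp only [Matrix.sub_mul, Matrix.mul_sub, Matrix.smul_mul, Matrix.mul_smul,
        Matrix.one_mul, Matrix.mul_one, Matrix.mul_neg, Matrix.neg_mul, smul_neg]
      abel
    have h4 : Kc * Vc * Kcᵀ = ((P * Cᵀ * V⁻¹) * V * (P * Cᵀ * V⁻¹)ᵀ).map Complex.ofReal := by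
      rw [hmap, hmap, ← Matrix.transpose_map, hKc, hVc]
    have h5 : Ac * Pc = (A * P).map Complex.ofReal := (hmap _ _ _ _ _).symm
    have h6 : Pc * Acᵀ = (P * Aᵀ).map Complex.ofReal := by
      rw [hmap, Matrix.transpose_map]
    rw [add_assoc, h3, h4, h5, h6, hWcdef]
    conv_lhs => rw [rW]
    ext i j
    simp [Matrix.map_apply, Matrix.sub_apply, Matrix.neg_apply, Matrix.add_apply]
    ring
  -- cancellation facts
  have hSdet : IsUnit S.det := S.isUnit_iff_isUnit_det.mp h1
  have hTdet : IsUnit T.det := T.isUnit_iff_isUnit_det.mp h2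
  have hS' : ∀ X : Matrix (Fin m) (Fin l) ℂ, S⁻¹ * (S * X) = X := fun X => by
    rw [← Matrix.mul_assoc, Matrix.nonsing_inv_mul S hSdet, Matrix.one_mul]
  have hT' : ∀ X : Matrix (Fin m) (Fin l) ℂ, Tᵀ * ((T⁻¹)ᵀ * X) = X := fun X => by
    rw [← Matrix.mul_assoc, ← Matrix.transpose_mul, Matrix.nonsing_inv_mul T hTdet,
      Matrix.transpose_one, Matrix.one_mul]
  have hKV' : ∀ X : Matrix (Fin l) (Fin l) ℂ, Kc * (Vc * X) = Pc * (Ccᵀ * X) := fun X => by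
    rw [← Matrix.mul_assoc, hKV, Matrix.mul_assoc]
  have hVK' : ∀ X : Matrix (Fin m) (Fin l) ℂ, Vc * (Kcᵀ * X) = Cc * (Pc * X) := fun X => by
    rw [← Matrix.mul_assoc, hVK, Matrix.mul_assoc]
  rw [hWc]
  simp only [Matrix.transpose_add, Matrix.transpose_one, Matrix.transpose_mul,
    Matrix.add_mul, Matrix.mul_add, Matrix.one_mul, Matrix.mul_one, Matrix.mul_assoc,
    hS', hT', hKV', hVK', hKV, hVK]
  abel
end

section
/- Let A ∈ ℝ^{m×m}, C ∈ ℝ^{l×m}, K ∈ ℝ^{m×l}. Then lim_{s→∞} s·ln|det(I + C(sI − A)⁻¹K)| = tr(CK), with the limit along real s → +∞. -/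
open Matrix Filter

private lemma differentiableAt_det_aux {n : ℕ} {M : ℝ → Matrix (Fin n) (Fin n) ℝ} {x : ℝ}
    (h : ∀ i j, DifferentiableAt ℝ (fun t => M t i j) x) :
    DifferentiableAt ℝ (fun t => (M t).det) x := by
  simp only [Matrix.det_apply, Units.smul_def, zsmul_eq_mul]
  exact DifferentiableAt.fun_sum fun σ _ =>
    (differentiableAt_const _).fun_mul
      (DifferentiableAt.fun_finsetProd fun i _ => h (σ i) i)

private lemma hasDerivAt_det_aux {n : ℕ} {M : ℝ → Matrix (Fin n) (Fin n) ℝ}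
    {M' : Matrix (Fin n) (Fin n) ℝ}
    (h : ∀ i j, HasDerivAt (fun t => M t i j) (M' i j) 0) (h0 : M 0 = 1) :
    HasDerivAt (fun t => (M t).det) M'.trace 0 := by
  have key : ∀ σ : Equiv.Perm (Fin n),
      HasDerivAt (fun t => ∏ i, M t (σ i) i)
        (∑ i, (∏ j ∈ Finset.univ.erase i, M 0 (σ j) j) • M' (σ i) i) 0 :=
    fun σ => HasDerivAt.fun_finsetProd (fun i _ => h (σ i) i)
  have h2 : HasDerivAt (fun t => (M t).det)
      (∑ σ : Equiv.Perm (Fin n), (((Equiv.Perm.sign σ : ℤ) : ℝ)) *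
        (∑ i, (∏ j ∈ Finset.univ.erase i, M 0 (σ j) j) • M' (σ i) i)) 0 := by
    simp only [Matrix.det_apply, Units.smul_def, zsmul_eq_mul]
    exact HasDerivAt.fun_sum fun σ _ => (key σ).const_mul _
  convert h2 using 1
  rw [Finset.sum_eq_single (1 : Equiv.Perm (Fin n))]
  · simp [h0, Matrix.trace, Matrix.diag, Matrix.one_apply]
  · intro σ _ hσ
    have hz : ∀ i : Fin n, (∏ j ∈ Finset.univ.erase i, M 0 (σ j) j) = 0 := by
      intro i
      obtain ⟨j, hji, hj⟩ : ∃ j, j ≠ i ∧ σ j ≠ j := by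
        by_contra hcon
        push_neg at hcon
        apply hσ
        refine Equiv.ext fun k => ?_
        simp only [Equiv.Perm.coe_one, id_eq]
        by_cases hk : k = i
        · subst hk
          by_contra hki
          exact hki (σ.injective (hcon (σ k) hki))
        · exact hcon k hk
      refine Finset.prod_eq_zero (Finset.mem_erase.mpr ⟨hji, Finset.mem_univ j⟩) ?_
      rw [h0]
      exact Matrix.one_apply_ne hj
    simp [hz]
  · simp

theorem stmt12 (m l : ℕ) (A : Matrix (Fin m) (Fin m) ℝ)
    (C : Matrix (Fin l) (Fin m) ℝ) (K : Matrix (Fin m) (Fin l) ℝ) :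
    Tendsto (fun s : ℝ =>
        s * Real.log |((1 : Matrix (Fin l) (Fin l) ℝ) +
            C * (s • (1 : Matrix (Fin m) (Fin m) ℝ) - A)⁻¹ * K).det|)
      atTop (nhds (C * K).trace) := by
  classical
  set d : ℝ → ℝ := fun t => ((1 : Matrix (Fin m) (Fin m) ℝ) - t • A).det with hd_def
  set N : ℝ → Matrix (Fin l) (Fin l) ℝ :=
    fun t => C * adjugate ((1 : Matrix (Fin m) (Fin m) ℝ) - t • A) * K with hN_def
  set u : ℝ → ℝ := fun t => t * (d t)⁻¹ with hu_def
  set g : ℝ → ℝ := fun t => ((1 : Matrix (Fin l) (Fin l) ℝ) +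
    C * ((1 : Matrix (Fin m) (Fin m) ℝ) - t • A)⁻¹ * (t • K)).det with hg_def
  set G : ℝ → ℝ := fun t => ((1 : Matrix (Fin l) (Fin l) ℝ) + u t • N t).det with hG_def
  have hbase : ∀ i j, DifferentiableAt ℝ
      (fun t : ℝ => ((1 : Matrix (Fin m) (Fin m) ℝ) - t • A) i j) 0 := by
    intro i j
    simp only [Matrix.sub_apply, Matrix.smul_apply, smul_eq_mul]
    exact (differentiableAt_const _).sub (differentiableAt_id.mul (differentiableAt_const _))
  have hd0 : d 0 = 1 := by simp [hd_def]
  have hdd : DifferentiableAt ℝ d 0 := differentiableAt_det_aux hbase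
  have hd0ne : d 0 ≠ 0 := by rw [hd0]; exact one_ne_zero
  have hadj : ∀ i j, DifferentiableAt ℝ
      (fun t : ℝ => adjugate ((1 : Matrix (Fin m) (Fin m) ℝ) - t • A) i j) 0 := by
    intro i j
    simp only [Matrix.adjugate_apply]
    refine differentiableAt_det_aux fun i' j' => ?_
    by_cases h : i' = j
    · simp only [Matrix.updateRow_apply, h, if_true]
      exact differentiableAt_const _
    · simp only [Matrix.updateRow_apply, h, if_false]
      exact hbase i' j'
  have hN : ∀ i j, DifferentiableAt ℝ (fun t : ℝ => N t i j) 0 := by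
    intro i j
    simp only [hN_def, Matrix.mul_apply]
    exact DifferentiableAt.fun_sum fun k' _ =>
      (DifferentiableAt.fun_sum fun k _ => (differentiableAt_const _).fun_mul (hadj k k')).fun_mul
        (differentiableAt_const _)
  have hN0 : N 0 = C * K := by
    simp [hN_def]
  have hu0 : u 0 = 0 := by simp [hu_def]
  have hu : HasDerivAt u 1 0 := by
    have hinv : DifferentiableAt ℝ (fun t => (d t)⁻¹) 0 := hdd.inv hd0ne
    have := (hasDerivAt_id (0 : ℝ)).fun_mul hinv.hasDerivAt
    simpa [hd0] using this
  have hMentry : ∀ i j, HasDerivAt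
      (fun t : ℝ => ((1 : Matrix (Fin l) (Fin l) ℝ) + u t • N t) i j) ((C * K) i j) 0 := by
    intro i j
    simp only [Matrix.add_apply, Matrix.smul_apply, smul_eq_mul]
    have hmul := hu.mul (hN i j).hasDerivAt
    have : (1 : ℝ) * N 0 i j + u 0 * deriv (fun t => N t i j) 0 = (C * K) i j := by
      simp [hu0, hN0]
    rw [this] at hmul
    exact hmul.const_add _
  have hG : HasDerivAt G ((C * K).trace) 0 := by
    refine hasDerivAt_det_aux hMentry ?_
    simp [hu0]
  have hdcont : ∀ᶠ t in nhds (0 : ℝ), d t ≠ 0 := by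
    have hc : Continuous d := by
      have : Continuous fun t : ℝ => (1 : Matrix (Fin m) (Fin m) ℝ) - t • A :=
        continuous_const.sub (continuous_id.smul continuous_const)
      exact this.matrix_det
    exact hc.continuousAt.eventually_ne hd0ne
  have hgG : g =ᶠ[nhds (0 : ℝ)] G := by
    filter_upwards [hdcont] with t ht
    have hinv : ((1 : Matrix (Fin m) (Fin m) ℝ) - t • A)⁻¹
        = (d t)⁻¹ • adjugate ((1 : Matrix (Fin m) (Fin m) ℝ) - t • A) := by
      rw [Matrix.inv_def, Ring.inverse_eq_inv]
    simp only [hg_def, hG_def, hinv, hu_def, hN_def]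
    congr 2
    rw [Matrix.mul_smul, Matrix.mul_smul, Matrix.smul_mul, smul_smul, mul_comm]
  have hg : HasDerivAt g ((C * K).trace) 0 := hG.congr_of_eventuallyEq hgG
  have hg0 : g 0 = 1 := by simp [hg_def]
  have hlog : HasDerivAt (fun t => Real.log (g t)) ((C * K).trace) 0 := by
    have := hg.log (by rw [hg0]; exact one_ne_zero)
    simpa [hg0] using this
  have hslope : Tendsto (fun t => Real.log (g t) / t) (nhdsWithin (0 : ℝ) {(0 : ℝ)}ᶜ)
      (nhds ((C * K).trace)) := by
    have := hasDerivAt_iff_tendsto_slope.mp hlog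
    refine this.congr fun t => ?_
    simp [slope_def_field, hg0]
  have hinvt : Tendsto (fun s : ℝ => s⁻¹) atTop (nhdsWithin (0 : ℝ) {(0 : ℝ)}ᶜ) :=
    tendsto_inv_atTop_nhdsGT_zero.mono_right
      (nhdsWithin_mono _ fun x hx => (Set.mem_Ioi.mp hx).ne')
  have hfinal : Tendsto (fun s : ℝ => Real.log (g s⁻¹) / s⁻¹) atTop
      (nhds ((C * K).trace)) := hslope.comp hinvt
  refine hfinal.congr' ?_
  have hdinv : ∀ᶠ s : ℝ in atTop, d s⁻¹ ≠ 0 := tendsto_inv_atTop_zero.eventually hdcont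
  filter_upwards [eventually_gt_atTop (0 : ℝ), hdinv] with s hs hds
  have hsne : s ≠ 0 := hs.ne'
  have hunit : IsUnit ((1 : Matrix (Fin m) (Fin m) ℝ) - s⁻¹ • A).det :=
    isUnit_iff_ne_zero.mpr hds
  have hM : s • (1 : Matrix (Fin m) (Fin m) ℝ) - A
      = s • ((1 : Matrix (Fin m) (Fin m) ℝ) - s⁻¹ • A) := by
    rw [smul_sub, smul_smul, mul_inv_cancel₀ hsne, one_smul]
  have hinveq : (s • (1 : Matrix (Fin m) (Fin m) ℝ) - A)⁻¹
      = s⁻¹ • ((1 : Matrix (Fin m) (Fin m) ℝ) - s⁻¹ • A)⁻¹ := by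
    refine Matrix.inv_eq_right_inv ?_
    rw [hM, Matrix.smul_mul, Matrix.mul_smul, smul_smul, mul_inv_cancel₀ hsne, one_smul,
      Matrix.mul_nonsing_inv _ hunit]
  have hkey : C * (s • (1 : Matrix (Fin m) (Fin m) ℝ) - A)⁻¹ * K
      = C * ((1 : Matrix (Fin m) (Fin m) ℝ) - s⁻¹ • A)⁻¹ * (s⁻¹ • K) := by
    rw [hinveq, Matrix.mul_smul, Matrix.smul_mul, Matrix.mul_smul]
  rw [hkey]
  simp only [hg_def]
  rw [Real.log_abs, div_eq_mul_inv, inv_inv, mul_comm]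
end
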